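/- Let L be the free module on a basis A of s elements over the free associative algebra R of rank r > 1 over a field, N a submodule, M = L/N. If there exists c > 0 with dim(image of B(A,n) in M) ≥ c·rⁿ for all n (i.e. M has maximal growth), then there exists θ with 0 < θ < 1 such that c_{A,N}(n)/g_{A,L}(n) < θ for all n, where c_{A,N}(n) = dim(N ∩ B(A,n)) and g_{A,L}(n) = dim B(A,n). Conversely, if dim(image of B(A,n) in M)/rⁿ → 0, then c_{A,N}(n)/g_{A,L}(n) → 1. -/

import Mathlib

open Module Filter

noncomputable section

/-- The `n`-th term of the standard filtration of the free associative algebra: the span of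
the (images of the) monomials of degree at most `n`. -/
def freeAlgFil (Φ : Type*) [Field Φ] (r n : ℕ) : Submodule Φ (FreeAlgebra Φ (Fin r)) :=
  Submodule.span Φ
    {x | ∃ w : List (Fin r), w.length ≤ n ∧ x = (w.map (FreeAlgebra.ι Φ)).prod}

/-- The ball of radius `n` around the standard basis of the free module `ι →₀ R` over the
free associative algebra `R`. -/
def freeModBall (Φ : Type*) [Field Φ] (r : ℕ) (ι : Type*) (n : ℕ) :
    Submodule Φ (ι →₀ FreeAlgebra Φ (Fin r)) :=
  Submodule.span Φ
    {x | ∃ i : ι, ∃ p ∈ freeAlgFil Φ r n, x = Finsupp.single i p}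

/- ### Auxiliary lemmas -/
open scoped Classical

lemma aux_symm_single (Φ : Type*) [Field Φ] (X : Type*) (m : FreeMonoid X) :
    FreeAlgebra.equivMonoidAlgebraFreeMonoid.symm (MonoidAlgebra.single m (1:Φ)) =
      ((FreeMonoid.toList m).map (FreeAlgebra.ι Φ)).prod := by
  induction m using FreeMonoid.recOn with
  | one =>
    rw [← MonoidAlgebra.one_def, map_one]
    rfl
  | of_mul x m ih =>
    have : MonoidAlgebra.single (FreeMonoid.of x * m) (1:Φ)
        = MonoidAlgebra.single (FreeMonoid.of x) 1 * MonoidAlgebra.single m 1 := by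
      rw [MonoidAlgebra.single_mul_single, one_mul]
    rw [this, map_mul, ih]
    have h2 : FreeAlgebra.equivMonoidAlgebraFreeMonoid.symm
        (MonoidAlgebra.single (FreeMonoid.of x) (1:Φ)) = FreeAlgebra.ι Φ x := by
      apply FreeAlgebra.equivMonoidAlgebraFreeMonoid.injective
      rw [AlgEquiv.apply_symm_apply]
      simp [FreeAlgebra.equivMonoidAlgebraFreeMonoid]
    rw [h2]
    rfl

lemma basisFreeMonoid_apply (Φ : Type*) [Field Φ] (X : Type*) (m : FreeMonoid X) :
    FreeAlgebra.basisFreeMonoid Φ X m = ((FreeMonoid.toList m).map (FreeAlgebra.ι Φ)).prod := by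
  rw [FreeAlgebra.basisFreeMonoid, Basis.map_apply, Finsupp.coe_basisSingleOne]
  exact aux_symm_single Φ X m

/-- Finset of words of length at most `n`. -/
def wordFinset (r : ℕ) : ℕ → Finset (List (Fin r))
  | 0 => {[]}
  | n+1 => {[]} ∪ (Finset.univ ×ˢ wordFinset r n).image (fun p => p.1 :: p.2)

lemma mem_wordFinset (r n : ℕ) (w : List (Fin r)) : w ∈ wordFinset r n ↔ w.length ≤ n := by
  induction n generalizing w with
  | zero =>
    simp [wordFinset, List.length_eq_zero_iff]
  | succ n ih =>
    cases w with
    | nil => simp [wordFinset]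
    | cons a t =>
      simp [wordFinset, ih, Nat.succ_le_succ_iff]

lemma card_wordFinset (r n : ℕ) (hr : 2 ≤ r) : (wordFinset r n).card ≤ 2 * r ^ n - 1 := by
  induction n with
  | zero => simp [wordFinset]
  | succ n ih =>
    have h1 : (wordFinset r (n+1)).card ≤ 1 + r * (wordFinset r n).card := by
      refine (Finset.card_union_le _ _).trans ?_
      simp only [Finset.card_singleton]
      gcongr
      refine (Finset.card_image_le).trans ?_
      rw [Finset.card_product, Finset.card_univ, Fintype.card_fin]
    have ha : 1 ≤ r ^ n := Nat.one_le_pow _ _ (by omega)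
    have h3 : r * (2 * r ^ n - 1) = 2 * (r * r ^ n) - r := by
      rw [Nat.mul_sub]; ring_nf
    have h4 : r ≤ r * r ^ n := Nat.le_mul_of_pos_right _ (by omega)
    have h5 : r ^ (n+1) = r * r ^ n := by rw [pow_succ]; ring
    have h6 : r * (wordFinset r n).card ≤ r * (2 * r ^ n - 1) :=
      Nat.mul_le_mul_left _ ih
    omega

/-- The finite spanning set of the ball. -/
def ballFinset (Φ : Type*) [Field Φ] (r : ℕ) (ι : Type*) [Fintype ι]
    (n : ℕ) : Finset (ι →₀ FreeAlgebra Φ (Fin r)) :=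
  (Finset.univ ×ˢ wordFinset r n).image
    (fun p => Finsupp.single p.1 ((p.2.map (FreeAlgebra.ι Φ)).prod))

lemma ball_eq_span (Φ : Type*) [Field Φ] (r : ℕ) (ι : Type*) [Fintype ι]
    (n : ℕ) :
    freeModBall Φ r ι n = Submodule.span Φ (ballFinset Φ r ι n : Set _) := by
  apply le_antisymm
  · rw [freeModBall, Submodule.span_le]
    rintro x ⟨i, p, hp, rfl⟩
    have : Finsupp.single i p ∈ Submodule.map (Finsupp.lsingle (M := FreeAlgebra Φ (Fin r)) i)
        (freeAlgFil Φ r n) := ⟨p, hp, rfl⟩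
    rw [freeAlgFil, Submodule.map_span] at this
    refine Submodule.span_mono ?_ this
    rintro y ⟨z, ⟨w, hw, rfl⟩, rfl⟩
    simp only [ballFinset, Finset.coe_image, Set.mem_image]
    exact ⟨(i, w), by simp [Finset.mem_coe, mem_wordFinset, hw], rfl⟩
  · rw [Submodule.span_le]
    rintro x hx
    simp only [ballFinset, Finset.coe_image, Set.mem_image, Finset.mem_coe,
      Finset.mem_product] at hx
    obtain ⟨⟨i, w⟩, ⟨-, hw⟩, rfl⟩ := hx
    refine Submodule.subset_span ⟨i, _, ?_, rfl⟩
    exact Submodule.subset_span ⟨w, (mem_wordFinset r n w).1 hw, rfl⟩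

instance ball_fd (Φ : Type*) [Field Φ] (r : ℕ) (ι : Type*) [Fintype ι] (n : ℕ) :
    FiniteDimensional Φ (freeModBall Φ r ι n) := by
  rw [ball_eq_span]
  exact FiniteDimensional.span_of_finite Φ (Finset.finite_toSet _)

lemma ball_finrank_le (Φ : Type*) [Field Φ] (r : ℕ) (hr : 2 ≤ r) (ι : Type*) [Fintype ι]
    (n : ℕ) :
    finrank Φ (freeModBall Φ r ι n) ≤ Fintype.card ι * (2 * r ^ n - 1) := by
  rw [ball_eq_span]
  refine (finrank_span_finset_le_card _).trans ?_
  refine (Finset.card_image_le).trans ?_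
  rw [Finset.card_product, Finset.card_univ]
  exact Nat.mul_le_mul_left _ (card_wordFinset r n hr)

lemma ball_finrank_ge (Φ : Type*) [Field Φ] (r : ℕ) (ι : Type*) [Fintype ι] [Nonempty ι]
    (n : ℕ) : r ^ n ≤ finrank Φ (freeModBall Φ r ι n) := by
  obtain ⟨i₀⟩ := ‹Nonempty ι›
  set b : Basis (ι × FreeMonoid (Fin r)) Φ (ι →₀ FreeAlgebra Φ (Fin r)) :=
    (Finsupp.basis (fun _ : ι => FreeAlgebra.basisFreeMonoid Φ (Fin r))).reindex
      (Equiv.sigmaEquivProd _ _) with hb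
  set u : (Fin n → Fin r) → ι × FreeMonoid (Fin r) :=
    fun f => (i₀, FreeMonoid.ofList (List.ofFn f)) with hu
  have hui : Function.Injective u := by
    intro f g hfg
    have := congrArg Prod.snd hfg
    simp only [hu] at this
    exact List.ofFn_injective (FreeMonoid.ofList.injective this)
  have hli : LinearIndependent Φ (b ∘ u) := b.linearIndependent.comp u hui
  have hmem : ∀ f : Fin n → Fin r, b (u f) ∈ freeModBall Φ r ι n := by
    intro f
    have hval : b (u f) =
        Finsupp.single i₀ (((List.ofFn f).map (FreeAlgebra.ι Φ)).prod) := by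
      rw [hb, Basis.reindex_apply]
      simp only [hu, Equiv.sigmaEquivProd_symm_apply]
      rw [Finsupp.coe_basis]
      simp [basisFreeMonoid_apply]
    rw [hval]
    refine Submodule.subset_span ⟨i₀, _, ?_, rfl⟩
    exact Submodule.subset_span ⟨List.ofFn f, by simp, rfl⟩
  have : (Fintype.card (Fin n → Fin r)) ≤ finrank Φ (freeModBall Φ r ι n) := by
    have hle : Submodule.span Φ (Set.range (b ∘ u)) ≤ freeModBall Φ r ι n := by
      rw [Submodule.span_le]
      rintro x ⟨f, rfl⟩
      exact hmem f
    have h1 : finrank Φ (Submodule.span Φ (Set.range (b ∘ u)))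
        = Fintype.card (Fin n → Fin r) := finrank_span_eq_card hli
    calc Fintype.card (Fin n → Fin r)
        = finrank Φ (Submodule.span Φ (Set.range (b ∘ u))) := h1.symm
      _ ≤ finrank Φ (freeModBall Φ r ι n) := Submodule.finrank_mono hle
  simpa using this

theorem span_image_finrank_aux (K V W : Type*) [Field K] [AddCommGroup V] [Module K V]
    [AddCommGroup W] [Module K W] (f : V →ₗ[K] W) (B : Submodule K V)
    [FiniteDimensional K B] :
    finrank K (Submodule.span K (f '' B)) + finrank K (LinearMap.ker f ⊓ B : Submodule K V)
      = finrank K B := by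
  let f' : B →ₗ[K] W := f.comp B.subtype
  have h1 : Submodule.span K (f '' B) = LinearMap.range f' := by
    rw [LinearMap.range_comp, Submodule.range_subtype]
    conv_rhs => rw [← Submodule.span_eq B, Submodule.map_span]
  have h2 : LinearMap.ker f' = Submodule.comap B.subtype (LinearMap.ker f ⊓ B) := by
    rw [Submodule.comap_inf, Submodule.comap_subtype_self, inf_top_eq]
    exact LinearMap.ker_comp _ _
  rw [h1, ← LinearMap.finrank_range_add_finrank_ker f']
  congr 1
  rw [h2]
  exact ((Submodule.comapSubtypeEquivOfLe inf_le_right).finrank_eq).symm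

lemma rank_nullity (Φ : Type*) [Field Φ] (r : ℕ) (ι : Type*) [Fintype ι]
    (N : Submodule (FreeAlgebra Φ (Fin r)) (ι →₀ FreeAlgebra Φ (Fin r))) (n : ℕ) :
    finrank Φ (Submodule.span Φ (N.mkQ '' (freeModBall Φ r ι n : Set _)))
      + finrank Φ (N.restrictScalars Φ ⊓ freeModBall Φ r ι n : Submodule Φ _)
      = finrank Φ (freeModBall Φ r ι n) := by
  have h := span_image_finrank_aux Φ (ι →₀ FreeAlgebra Φ (Fin r))
    ((ι →₀ FreeAlgebra Φ (Fin r)) ⧸ N) (N.mkQ.restrictScalars Φ) (freeModBall Φ r ι n)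
  rw [LinearMap.ker_restrictScalars, Submodule.ker_mkQ] at h
  exact h

theorem cogrowth_ratio (Φ : Type*) [Field Φ] (r : ℕ) (hr : 1 < r)
    (ι : Type*) [Fintype ι] [Nonempty ι]
    (N : Submodule (FreeAlgebra Φ (Fin r)) (ι →₀ FreeAlgebra Φ (Fin r))) :
    ((∃ c : ℝ, 0 < c ∧ ∀ n : ℕ, c * (r : ℝ) ^ n ≤
        (finrank Φ (Submodule.span Φ (N.mkQ '' (freeModBall Φ r ι n : Set _))) : ℝ)) →
      ∃ θ : ℝ, 0 < θ ∧ θ < 1 ∧ ∀ n : ℕ,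
        ((finrank Φ (N.restrictScalars Φ ⊓ freeModBall Φ r ι n : Submodule Φ _) : ℝ) /
          (finrank Φ (freeModBall Φ r ι n) : ℝ)) < θ) ∧
    (Tendsto (fun n : ℕ =>
        (finrank Φ (Submodule.span Φ (N.mkQ '' (freeModBall Φ r ι n : Set _))) : ℝ)
          / (r : ℝ) ^ n) atTop (nhds 0) →
      Tendsto (fun n : ℕ =>
        ((finrank Φ (N.restrictScalars Φ ⊓ freeModBall Φ r ι n : Submodule Φ _) : ℝ) /
          (finrank Φ (freeModBall Φ r ι n) : ℝ))) atTop (nhds 1)) := by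
  set g : ℕ → ℝ := fun n => (finrank Φ (freeModBall Φ r ι n) : ℝ) with hgdef
  set m : ℕ → ℝ := fun n =>
    (finrank Φ (Submodule.span Φ (N.mkQ '' (freeModBall Φ r ι n : Set _))) : ℝ) with hmdef
  set cc : ℕ → ℝ := fun n =>
    (finrank Φ (N.restrictScalars Φ ⊓ freeModBall Φ r ι n : Submodule Φ _) : ℝ) with hccdef
  have hs : (0:ℝ) < (Fintype.card ι : ℝ) := by
    exact_mod_cast Fintype.card_pos
  have hrR : (1:ℝ) < (r:ℝ) := by exact_mod_cast hr
  have hrpow : ∀ n : ℕ, (0:ℝ) < (r:ℝ)^n := fun n => pow_pos (by linarith) n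
  have hsum : ∀ n, m n + cc n = g n := by
    intro n
    simp only [hmdef, hccdef, hgdef]
    exact_mod_cast rank_nullity Φ r ι N n
  have hlow : ∀ n, (r:ℝ)^n ≤ g n := by
    intro n
    simp only [hgdef]
    exact_mod_cast ball_finrank_ge Φ r ι n
  have hg0 : ∀ n, (0:ℝ) < g n := fun n => lt_of_lt_of_le (hrpow n) (hlow n)
  have hm0 : ∀ n, (0:ℝ) ≤ m n := fun n => by rw [hmdef]; positivity
  have hhigh : ∀ n, g n < 2 * (Fintype.card ι : ℝ) * (r:ℝ)^n := by
    intro n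
    have h1 : finrank Φ (freeModBall Φ r ι n) ≤ Fintype.card ι * (2 * r ^ n - 1) :=
      ball_finrank_le Φ r (by omega) ι n
    have h2 : 1 ≤ 2 * r ^ n := by
      have := Nat.one_le_pow n r (by omega); omega
    have h3 : g n ≤ (Fintype.card ι : ℝ) * (2 * (r:ℝ)^n - 1) := by
      rw [hgdef]
      calc (finrank Φ (freeModBall Φ r ι n) : ℝ)
          ≤ ((Fintype.card ι * (2 * r ^ n - 1) : ℕ) : ℝ) := by exact_mod_cast h1
        _ = (Fintype.card ι : ℝ) * (2 * (r:ℝ)^n - 1) := by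
            push_cast [Nat.cast_sub h2]; ring
    nlinarith [hs]
  constructor
  · rintro ⟨c, hc, hcn⟩
    refine ⟨max (1 - c / (2 * (Fintype.card ι : ℝ))) (1/2), ?_, ?_, ?_⟩
    · exact lt_of_lt_of_le (by norm_num) (le_max_right _ _)
    · refine max_lt ?_ (by norm_num)
      have : 0 < c / (2 * (Fintype.card ι : ℝ)) := by positivity
      linarith
    · intro n
      rw [div_lt_iff₀ (hg0 n)]
      have h1 : c * (r:ℝ)^n ≤ m n := hcn n
      set d : ℝ := c / (2 * (Fintype.card ι : ℝ)) with hd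
      have hd0 : 0 < d := by positivity
      have hdc : d * (2 * (Fintype.card ι : ℝ) * (r:ℝ)^n) = c * (r:ℝ)^n := by
        field_simp [hd]
        rw [hd, div_mul_eq_mul_div, div_mul_eq_mul_div, div_eq_iff (by positivity)]
        ring
      have h2 : d * g n < c * (r:ℝ)^n := by
        rw [← hdc]
        exact mul_lt_mul_of_pos_left (hhigh n) hd0
      have h3 : cc n = g n - m n := by linarith [hsum n]
      have h4 : (1 - d) ≤ max (1 - d) (1/2) := le_max_left _ _
      have h5 : (1 - d) * g n ≤ max (1 - d) (1/2) * g n :=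
        mul_le_mul_of_nonneg_right h4 (hg0 n).le
      nlinarith
  · intro h
    have hm : Tendsto (fun n => m n / g n) atTop (nhds 0) := by
      refine squeeze_zero (fun n => div_nonneg (hm0 n) (hg0 n).le) (fun n => ?_) h
      exact div_le_div_of_nonneg_left (hm0 n) (hrpow n) (hlow n)
    have h1 : Tendsto (fun n => 1 - m n / g n) atTop (nhds 1) := by
      have := (tendsto_const_nhds (x := (1:ℝ)) (f := atTop)).sub hm
      simpa using this
    refine Tendsto.congr (fun n => ?_) h1
    have h3 : cc n = g n - m n := by linarith [hsum n]
    show 1 - m n / g n = cc n / g n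
    rw [h3, sub_div, div_self (hg0 n).ne']
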